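/- (One-step error recursion in expectation.) Let d, Q be positive integers with Q ≤ d, let γ ∈ (0,1), η > 0, G, σ, C_n ≥ 0. Let (Ω, ℱ, ℙ) be a probability space with a sub-σ-algebra ℱ_t, let f : ℝ^d → ℝ be differentiable, and let x, e be ℱ_t-measurable ℝ^d-valued square-integrable random vectors, g an ℝ^d-valued and w an ℝ^Q-valued square-integrable random vector, and e⁺ an ℝ^d-valued square-integrable random vector, satisfying: E[g | ℱ_t] = ∇f(x) a.s., E[‖g − ∇f(x)‖₂²] ≤ G², E[‖w‖₂²] ≤ σ², and almost surely ‖e⁺‖₂ ≤ √(γ/2)·‖η g + e‖₂ + η(C_n + √(Q/d))·‖w‖₂. Then E[‖e⁺‖₂²] ≤ ((1+γ)/2)·E[‖e‖₂²] + η²·(γ(1+γ)/(1−γ))·E[‖∇f(x)‖₂²] + η²·[(γ(1+γ)/(1−γ))·G² + 2(C_n + √(Q/d))²·σ²]. -/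

import Mathlib

open MeasureTheory


private lemma sq_add_le_aux (s t γ : ℝ) (hγ0 : 0 < γ) (hγ1 : γ < 1) :
    (s + t) ^ 2 ≤ (1 + γ) / (1 - γ) * s ^ 2 + (1 + γ) / (2 * γ) * t ^ 2 := by
  have h1 : 0 < 1 - γ := by linarith
  have key : (1 + γ) / (1 - γ) * s ^ 2 + (1 + γ) / (2 * γ) * t ^ 2 - (s + t) ^ 2
      = (2 * γ * s - (1 - γ) * t) ^ 2 / (2 * γ * (1 - γ)) := by
    field_simp
    ring
  have h2 : 0 ≤ (2 * γ * s - (1 - γ) * t) ^ 2 / (2 * γ * (1 - γ)) := by positivity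
  linarith


private lemma final_arith (γ η G σ c' LHS I SF Se Sh Sxi : ℝ)
    (hγ0 : 0 < γ) (hγ1 : γ < 1)
    (hstepA : LHS ≤ γ * I + 2 * (η * c') ^ 2 * σ ^ 2)
    (hsplit : I = SF + η ^ 2 * Sxi)
    (hstepC : SF ≤ (1 + γ) / (1 - γ) * (η ^ 2 * Sh) + (1 + γ) / (2 * γ) * Se)
    (hvar' : Sxi ≤ G ^ 2) (hSxi0 : 0 ≤ Sxi) :
    LHS ≤ (1 + γ) / 2 * Se + η ^ 2 * (γ * (1 + γ) / (1 - γ)) * Sh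
      + η ^ 2 * (γ * (1 + γ) / (1 - γ) * G ^ 2 + 2 * c' ^ 2 * σ ^ 2) := by
  have h1γ : 0 < 1 - γ := by linarith
  have hmul : γ * SF ≤ γ * ((1 + γ) / (1 - γ) * (η ^ 2 * Sh) + (1 + γ) / (2 * γ) * Se) :=
    mul_le_mul_of_nonneg_left hstepC hγ0.le
  have hco1 : γ * ((1 + γ) / (1 - γ) * (η ^ 2 * Sh) + (1 + γ) / (2 * γ) * Se)
      = η ^ 2 * (γ * (1 + γ) / (1 - γ)) * Sh + (1 + γ) / 2 * Se := by
    field_simp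
  have hsplit' : γ * I = γ * SF + γ * (η ^ 2 * Sxi) := by rw [hsplit]; ring
  have hxi : γ * (η ^ 2 * Sxi) ≤ η ^ 2 * (γ * (1 + γ) / (1 - γ)) * G ^ 2 := by
    have h1 : γ * Sxi ≤ γ * G ^ 2 := mul_le_mul_of_nonneg_left hvar' hγ0.le
    have h2 : γ ≤ γ * (1 + γ) / (1 - γ) := by
      rw [le_div_iff₀ h1γ]; nlinarith
    have h3 : η ^ 2 * (γ * Sxi) ≤ η ^ 2 * (γ * G ^ 2) :=
      mul_le_mul_of_nonneg_left h1 (sq_nonneg η)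
    have h4 : γ * G ^ 2 ≤ γ * (1 + γ) / (1 - γ) * G ^ 2 :=
      mul_le_mul_of_nonneg_right h2 (sq_nonneg G)
    have h5 : η ^ 2 * (γ * G ^ 2) ≤ η ^ 2 * (γ * (1 + γ) / (1 - γ) * G ^ 2) :=
      mul_le_mul_of_nonneg_left h4 (sq_nonneg η)
    nlinarith [h3, h5]
  have h2c : 2 * (η * c') ^ 2 * σ ^ 2 = η ^ 2 * (2 * c' ^ 2 * σ ^ 2) := by ring
  have hgoal : η ^ 2 * (γ * (1 + γ) / (1 - γ) * G ^ 2 + 2 * c' ^ 2 * σ ^ 2)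
      = η ^ 2 * (γ * (1 + γ) / (1 - γ)) * G ^ 2 + η ^ 2 * (2 * c' ^ 2 * σ ^ 2) := by ring
  linarith

set_option maxHeartbeats 1000000 in
theorem stmt12_aux (d Q : ℕ) (hd : 0 < d) (hQ : 0 < Q) (hQd : Q ≤ d)
    (γ η G σ Cn : ℝ) (hγ0 : 0 < γ) (hγ1 : γ < 1) (hη : 0 < η)
    (hG : 0 ≤ G) (hσ : 0 ≤ σ) (hCn : 0 ≤ Cn)
    {Ω : Type*} (ℱt : MeasurableSpace Ω) {m : MeasurableSpace Ω} (hℱt : ℱt ≤ m)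
    (P : Measure Ω) [IsProbabilityMeasure P]
    (f : EuclideanSpace ℝ (Fin d) → ℝ) (hf : Differentiable ℝ f)
    (x e eplus g : Ω → EuclideanSpace ℝ (Fin d)) (w : Ω → EuclideanSpace ℝ (Fin Q))
    (hx : StronglyMeasurable[ℱt] x) (he : StronglyMeasurable[ℱt] e)
    (hxL2 : MemLp x 2 P) (heL2 : MemLp e 2 P) (hgL2 : MemLp g 2 P)
    (hwL2 : MemLp w 2 P) (heplusL2 : MemLp eplus 2 P)
    (hcond : P[g|ℱt] =ᵐ[P] fun ω => gradient f (x ω))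
    (hvar : ∫ ω, ‖g ω - gradient f (x ω)‖ ^ 2 ∂P ≤ G ^ 2)
    (hnoise : ∫ ω, ‖w ω‖ ^ 2 ∂P ≤ σ ^ 2)
    (hrec : ∀ᵐ ω ∂P, ‖eplus ω‖ ≤ Real.sqrt (γ / 2) * ‖η • g ω + e ω‖
        + η * (Cn + Real.sqrt ((Q : ℝ) / d)) * ‖w ω‖) :
    ∫ ω, ‖eplus ω‖ ^ 2 ∂P ≤
      (1 + γ) / 2 * ∫ ω, ‖e ω‖ ^ 2 ∂P
      + η ^ 2 * (γ * (1 + γ) / (1 - γ)) * ∫ ω, ‖gradient f (x ω)‖ ^ 2 ∂P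
      + η ^ 2 * (γ * (1 + γ) / (1 - γ) * G ^ 2
          + 2 * (Cn + Real.sqrt ((Q : ℝ) / d)) ^ 2 * σ ^ 2) := by
  have h1γ : 0 < 1 - γ := by linarith
  set c' : ℝ := Cn + Real.sqrt ((Q : ℝ) / d) with hc'
  have hc'0 : 0 ≤ c' := add_nonneg hCn (Real.sqrt_nonneg _)
  -- conditional expectation as an L2 element
  set gL : Lp (EuclideanSpace ℝ (Fin d)) 2 P := hgL2.toLp g with hgLdef
  set hL : Lp (EuclideanSpace ℝ (Fin d)) 2 P :=
    (condExpL2 (EuclideanSpace ℝ (Fin d)) ℝ hℱt gL : Lp (EuclideanSpace ℝ (Fin d)) 2 P) with hhLdef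
  have hgL_ae : ⇑gL =ᵐ[P] g := hgL2.coeFn_toLp
  have hmeasL : AEStronglyMeasurable[ℱt] (⇑hL) P := aestronglyMeasurable_condExpL2 hℱt gL
  have hLint : Integrable (⇑hL) P := (Lp.memLp hL).integrable one_le_two
  have hcondL : P[g|ℱt] =ᵐ[P] ⇑hL := by
    refine (ae_eq_condExp_of_forall_setIntegral_eq hℱt (hgL2.integrable one_le_two)
      (fun s _ _ => hLint.integrableOn) (fun s hs _ => ?_) hmeasL).symm
    rw [integral_condExpL2_eq hℱt gL hs (measure_ne_top P s)]
    exact integral_congr_ae (ae_restrict_of_ae hgL_ae)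
  have hgrad_ae : (fun ω => gradient f (x ω)) =ᵐ[P] ⇑hL := hcond.symm.trans hcondL
  have hhL2 : MemLp (⇑hL) 2 P := Lp.memLp hL
  -- the predictable part F
  have hF2 : MemLp (fun ω => η • hL ω + e ω) 2 P := (hhL2.const_smul η).add heL2
  set FL : Lp (EuclideanSpace ℝ (Fin d)) 2 P := hF2.toLp _ with hFLdef
  have hFL_ae : ⇑FL =ᵐ[P] fun ω => η • hL ω + e ω := hF2.coeFn_toLp
  have hFmeas : AEStronglyMeasurable[ℱt] (⇑FL) P :=
    AEStronglyMeasurable.congr ((hmeasL.const_smul η).add he.aestronglyMeasurable) hFL_ae.symm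
  -- orthogonality
  have hkey : (inner ℝ gL FL : ℝ) = inner ℝ (hL : Lp (EuclideanSpace ℝ (Fin d)) 2 P) FL := by
    rw [hhLdef]
    exact (inner_condExpL2_eq_inner_fun hℱt gL FL hFmeas).symm
  have hIin1 : Integrable (fun ω => (inner ℝ (gL ω) (FL ω) : ℝ)) P := L2.integrable_inner gL FL
  have hIin2 : Integrable (fun ω => (inner ℝ (hL ω) (FL ω) : ℝ)) P := L2.integrable_inner hL FL
  have horthFL : ∫ ω, (inner ℝ (FL ω) (g ω - hL ω) : ℝ) ∂P = 0 := by
    have hptw : (fun ω => (inner ℝ (FL ω) (g ω - hL ω) : ℝ)) =ᵐ[P]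
        (fun ω => (inner ℝ (gL ω) (FL ω) : ℝ) - (inner ℝ (hL ω) (FL ω) : ℝ)) := by
      filter_upwards [hgL_ae] with ω hω
      rw [← hω, inner_sub_right, real_inner_comm (FL ω) (gL ω), real_inner_comm (FL ω) (hL ω)]
    rw [integral_congr_ae hptw, integral_sub hIin1 hIin2, ← L2.inner_def, ← L2.inner_def,
      hkey, sub_self]
  have horth : ∫ ω, (inner ℝ (η • hL ω + e ω) (g ω - hL ω) : ℝ) ∂P = 0 := by
    rw [← horthFL]
    refine integral_congr_ae ?_
    filter_upwards [hFL_ae] with ω hω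
    rw [hω]
  -- integrability facts
  have hIe : Integrable (fun ω => ‖e ω‖ ^ 2) P := heL2.norm.integrable_sq
  have hIhL : Integrable (fun ω => ‖hL ω‖ ^ 2) P := hhL2.norm.integrable_sq
  have hIF : Integrable (fun ω => ‖η • hL ω + e ω‖ ^ 2) P := hF2.norm.integrable_sq
  have hIge : Integrable (fun ω => ‖η • g ω + e ω‖ ^ 2) P :=
    ((hgL2.const_smul η).add heL2).norm.integrable_sq
  have hIxi : Integrable (fun ω => ‖g ω - hL ω‖ ^ 2) P := (hgL2.sub hhL2).norm.integrable_sq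
  have hIw : Integrable (fun ω => ‖w ω‖ ^ 2) P := hwL2.norm.integrable_sq
  have hIeplus : Integrable (fun ω => ‖eplus ω‖ ^ 2) P := heplusL2.norm.integrable_sq
  have hIinner : Integrable (fun ω => (inner ℝ (η • hL ω + e ω) (g ω - hL ω) : ℝ)) P := by
    refine (L2.integrable_inner (𝕜 := ℝ) FL ((hgL2.sub hhL2).toLp _)).congr ?_
    filter_upwards [hFL_ae, (hgL2.sub hhL2).coeFn_toLp] with ω h1 h2
    rw [h1, h2]
    rfl
  -- split the second moment of η • g + e
  have hsplit : ∫ ω, ‖η • g ω + e ω‖ ^ 2 ∂P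
      = ∫ ω, ‖η • hL ω + e ω‖ ^ 2 ∂P + η ^ 2 * ∫ ω, ‖g ω - hL ω‖ ^ 2 ∂P := by
    have hptw : (fun ω => ‖η • g ω + e ω‖ ^ 2) = fun ω => ‖η • hL ω + e ω‖ ^ 2
        + ((2 * η) * (inner ℝ (η • hL ω + e ω) (g ω - hL ω) : ℝ)
          + η ^ 2 * ‖g ω - hL ω‖ ^ 2) := by
      funext ω
      have hdecomp : η • g ω + e ω = (η • hL ω + e ω) + η • (g ω - hL ω) := by
        rw [smul_sub]; abel
      rw [hdecomp, norm_add_sq_real, real_inner_smul_right, norm_smul]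
      simp only [Real.norm_eq_abs, mul_pow, sq_abs]
      ring
    have hadd1 : ∫ ω, (‖η • hL ω + e ω‖ ^ 2
          + ((2 * η) * (inner ℝ (η • hL ω + e ω) (g ω - hL ω) : ℝ)
            + η ^ 2 * ‖g ω - hL ω‖ ^ 2)) ∂P
        = (∫ ω, ‖η • hL ω + e ω‖ ^ 2 ∂P)
          + ∫ ω, ((2 * η) * (inner ℝ (η • hL ω + e ω) (g ω - hL ω) : ℝ)
            + η ^ 2 * ‖g ω - hL ω‖ ^ 2) ∂P :=
      integral_add hIF ((hIinner.const_mul _).add (hIxi.const_mul _))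
    have hadd2 : ∫ ω, ((2 * η) * (inner ℝ (η • hL ω + e ω) (g ω - hL ω) : ℝ)
          + η ^ 2 * ‖g ω - hL ω‖ ^ 2) ∂P
        = (∫ ω, (2 * η) * (inner ℝ (η • hL ω + e ω) (g ω - hL ω) : ℝ) ∂P)
          + ∫ ω, η ^ 2 * ‖g ω - hL ω‖ ^ 2 ∂P :=
      integral_add (hIinner.const_mul _) (hIxi.const_mul _)
    have hmul1 : ∫ ω, (2 * η) * (inner ℝ (η • hL ω + e ω) (g ω - hL ω) : ℝ) ∂P
        = (2 * η) * ∫ ω, (inner ℝ (η • hL ω + e ω) (g ω - hL ω) : ℝ) ∂P :=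
      integral_const_mul _ _
    have hmul2 : ∫ ω, η ^ 2 * ‖g ω - hL ω‖ ^ 2 ∂P = η ^ 2 * ∫ ω, ‖g ω - hL ω‖ ^ 2 ∂P :=
      integral_const_mul _ _
    rw [hptw, hadd1, hadd2, hmul1, hmul2, horth]
    ring
  -- Step A
  have hstepA : ∫ ω, ‖eplus ω‖ ^ 2 ∂P
      ≤ γ * ∫ ω, ‖η • g ω + e ω‖ ^ 2 ∂P + 2 * (η * c') ^ 2 * σ ^ 2 := by
    have hptA : ∀ᵐ ω ∂P, ‖eplus ω‖ ^ 2
        ≤ γ * ‖η • g ω + e ω‖ ^ 2 + 2 * (η * c') ^ 2 * ‖w ω‖ ^ 2 := by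
      filter_upwards [hrec] with ω hω
      have hsq : Real.sqrt (γ / 2) ^ 2 = γ / 2 := Real.sq_sqrt (by linarith)
      have h2 : ‖eplus ω‖ ^ 2
          ≤ (Real.sqrt (γ / 2) * ‖η • g ω + e ω‖ + η * c' * ‖w ω‖) ^ 2 :=
        pow_le_pow_left₀ (norm_nonneg _) hω 2
      have h3 : (Real.sqrt (γ / 2) * ‖η • g ω + e ω‖ + η * c' * ‖w ω‖) ^ 2
          ≤ γ * ‖η • g ω + e ω‖ ^ 2 + 2 * (η * c') ^ 2 * ‖w ω‖ ^ 2 := by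
        nlinarith [sq_nonneg (Real.sqrt (γ / 2) * ‖η • g ω + e ω‖ - η * c' * ‖w ω‖),
          sq_nonneg (‖η • g ω + e ω‖), sq_nonneg (‖w ω‖)]
      exact h2.trans h3
    have hIrhsA : Integrable
        (fun ω => γ * ‖η • g ω + e ω‖ ^ 2 + 2 * (η * c') ^ 2 * ‖w ω‖ ^ 2) P :=
      (hIge.const_mul γ).add (hIw.const_mul _)
    have h1 : ∫ ω, ‖eplus ω‖ ^ 2 ∂P
        ≤ ∫ ω, (γ * ‖η • g ω + e ω‖ ^ 2 + 2 * (η * c') ^ 2 * ‖w ω‖ ^ 2) ∂P :=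
      integral_mono_ae hIeplus hIrhsA hptA
    have haddA : ∫ ω, (γ * ‖η • g ω + e ω‖ ^ 2 + 2 * (η * c') ^ 2 * ‖w ω‖ ^ 2) ∂P
        = (∫ ω, γ * ‖η • g ω + e ω‖ ^ 2 ∂P) + ∫ ω, 2 * (η * c') ^ 2 * ‖w ω‖ ^ 2 ∂P :=
      integral_add (hIge.const_mul γ) (hIw.const_mul _)
    have hmulA1 : ∫ ω, γ * ‖η • g ω + e ω‖ ^ 2 ∂P = γ * ∫ ω, ‖η • g ω + e ω‖ ^ 2 ∂P :=
      integral_const_mul _ _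
    have hmulA2 : ∫ ω, 2 * (η * c') ^ 2 * ‖w ω‖ ^ 2 ∂P
        = 2 * (η * c') ^ 2 * ∫ ω, ‖w ω‖ ^ 2 ∂P := integral_const_mul _ _
    have hlast : 2 * (η * c') ^ 2 * ∫ ω, ‖w ω‖ ^ 2 ∂P ≤ 2 * (η * c') ^ 2 * σ ^ 2 :=
      mul_le_mul_of_nonneg_left hnoise (by positivity)
    linarith
  -- Step C
  have hstepC : ∫ ω, ‖η • hL ω + e ω‖ ^ 2 ∂P
      ≤ (1 + γ) / (1 - γ) * (η ^ 2 * ∫ ω, ‖hL ω‖ ^ 2 ∂P)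
        + (1 + γ) / (2 * γ) * ∫ ω, ‖e ω‖ ^ 2 ∂P := by
    have hptC : ∀ ω, ‖η • hL ω + e ω‖ ^ 2
        ≤ (1 + γ) / (1 - γ) * (η ^ 2 * ‖hL ω‖ ^ 2) + (1 + γ) / (2 * γ) * ‖e ω‖ ^ 2 := by
      intro ω
      have h1 : ‖η • hL ω + e ω‖ ≤ η * ‖hL ω‖ + ‖e ω‖ := by
        refine (norm_add_le _ _).trans ?_
        rw [norm_smul, Real.norm_eq_abs, abs_of_pos hη]
      have h2 : ‖η • hL ω + e ω‖ ^ 2 ≤ (η * ‖hL ω‖ + ‖e ω‖) ^ 2 :=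
        pow_le_pow_left₀ (norm_nonneg _) h1 2
      have h3 := sq_add_le_aux (η * ‖hL ω‖) (‖e ω‖) γ hγ0 hγ1
      have h4 : (η * ‖hL ω‖) ^ 2 = η ^ 2 * ‖hL ω‖ ^ 2 := by ring
      rw [h4] at h3
      linarith
    have hIrhsC : Integrable
        (fun ω => (1 + γ) / (1 - γ) * (η ^ 2 * ‖hL ω‖ ^ 2)
          + (1 + γ) / (2 * γ) * ‖e ω‖ ^ 2) P :=
      ((hIhL.const_mul (η ^ 2)).const_mul _).add (hIe.const_mul _)
    have h1 : ∫ ω, ‖η • hL ω + e ω‖ ^ 2 ∂P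
        ≤ ∫ ω, ((1 + γ) / (1 - γ) * (η ^ 2 * ‖hL ω‖ ^ 2)
          + (1 + γ) / (2 * γ) * ‖e ω‖ ^ 2) ∂P :=
      integral_mono hIF hIrhsC hptC
    have haddC : ∫ ω, ((1 + γ) / (1 - γ) * (η ^ 2 * ‖hL ω‖ ^ 2)
          + (1 + γ) / (2 * γ) * ‖e ω‖ ^ 2) ∂P
        = (∫ ω, (1 + γ) / (1 - γ) * (η ^ 2 * ‖hL ω‖ ^ 2) ∂P)
          + ∫ ω, (1 + γ) / (2 * γ) * ‖e ω‖ ^ 2 ∂P :=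
      integral_add ((hIhL.const_mul (η ^ 2)).const_mul _) (hIe.const_mul _)
    have hmulC1 : ∫ ω, (1 + γ) / (1 - γ) * (η ^ 2 * ‖hL ω‖ ^ 2) ∂P
        = (1 + γ) / (1 - γ) * ∫ ω, η ^ 2 * ‖hL ω‖ ^ 2 ∂P := integral_const_mul _ _
    have hmulC1' : ∫ ω, η ^ 2 * ‖hL ω‖ ^ 2 ∂P = η ^ 2 * ∫ ω, ‖hL ω‖ ^ 2 ∂P :=
      integral_const_mul _ _
    have hmulC2 : ∫ ω, (1 + γ) / (2 * γ) * ‖e ω‖ ^ 2 ∂P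
        = (1 + γ) / (2 * γ) * ∫ ω, ‖e ω‖ ^ 2 ∂P := integral_const_mul _ _
    rw [haddC, hmulC1, hmulC1', hmulC2] at h1
    exact h1
  -- identify the gradient integral
  have hgradeq : ∫ ω, ‖gradient f (x ω)‖ ^ 2 ∂P = ∫ ω, ‖hL ω‖ ^ 2 ∂P := by
    refine integral_congr_ae ?_
    filter_upwards [hgrad_ae] with ω hω
    rw [hω]
  have hvar' : ∫ ω, ‖g ω - hL ω‖ ^ 2 ∂P ≤ G ^ 2 := by
    have heq : ∫ ω, ‖g ω - hL ω‖ ^ 2 ∂P = ∫ ω, ‖g ω - gradient f (x ω)‖ ^ 2 ∂P := by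
      refine integral_congr_ae ?_
      filter_upwards [hgrad_ae] with ω hω
      rw [hω]
    rw [heq]; exact hvar
  -- nonnegativity of integrals
  have hSe0 : 0 ≤ ∫ ω, ‖e ω‖ ^ 2 ∂P := integral_nonneg fun ω => by positivity
  have hSh0 : 0 ≤ ∫ ω, ‖hL ω‖ ^ 2 ∂P := integral_nonneg fun ω => by positivity
  have hSxi0 : 0 ≤ ∫ ω, ‖g ω - hL ω‖ ^ 2 ∂P := integral_nonneg fun ω => by positivity
  -- final assembly
  rw [hgradeq]
  exact final_arith γ η G σ c' _ _ _ _ _ _ hγ0 hγ1 hstepA hsplit hstepC hvar' hSxi0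


theorem stmt12 (d Q : ℕ) (hd : 0 < d) (hQ : 0 < Q) (hQd : Q ≤ d)
    (γ η G σ Cn : ℝ) (hγ0 : 0 < γ) (hγ1 : γ < 1) (hη : 0 < η)
    (hG : 0 ≤ G) (hσ : 0 ≤ σ) (hCn : 0 ≤ Cn)
    {Ω : Type*} {m : MeasurableSpace Ω} (P : Measure Ω) [IsProbabilityMeasure P]
    (ℱt : MeasurableSpace Ω) (hℱt : ℱt ≤ m)
    (f : EuclideanSpace ℝ (Fin d) → ℝ) (hf : Differentiable ℝ f)
    (x e eplus g : Ω → EuclideanSpace ℝ (Fin d)) (w : Ω → EuclideanSpace ℝ (Fin Q))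
    (hx : StronglyMeasurable[ℱt] x) (he : StronglyMeasurable[ℱt] e)
    (hxL2 : MemLp x 2 P) (heL2 : MemLp e 2 P) (hgL2 : MemLp g 2 P)
    (hwL2 : MemLp w 2 P) (heplusL2 : MemLp eplus 2 P)
    (hcond : P[g|ℱt] =ᵐ[P] fun ω => gradient f (x ω))
    (hvar : ∫ ω, ‖g ω - gradient f (x ω)‖ ^ 2 ∂P ≤ G ^ 2)
    (hnoise : ∫ ω, ‖w ω‖ ^ 2 ∂P ≤ σ ^ 2)
    (hrec : ∀ᵐ ω ∂P, ‖eplus ω‖ ≤ Real.sqrt (γ / 2) * ‖η • g ω + e ω‖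
        + η * (Cn + Real.sqrt ((Q : ℝ) / d)) * ‖w ω‖) :
    ∫ ω, ‖eplus ω‖ ^ 2 ∂P ≤
      (1 + γ) / 2 * ∫ ω, ‖e ω‖ ^ 2 ∂P
      + η ^ 2 * (γ * (1 + γ) / (1 - γ)) * ∫ ω, ‖gradient f (x ω)‖ ^ 2 ∂P
      + η ^ 2 * (γ * (1 + γ) / (1 - γ) * G ^ 2
          + 2 * (Cn + Real.sqrt ((Q : ℝ) / d)) ^ 2 * σ ^ 2) := by
  exact stmt12_aux d Q hd hQ hQd γ η G σ Cn hγ0 hγ1 hη hG hσ hCn ℱt hℱt P f hf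
    x e eplus g w hx he hxL2 heL2 hgL2 hwL2 heplusL2 hcond hvar hnoise hrec
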